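/- Let (F,R) be a metric space and K ⊆ F a nonempty compact subset. Suppose there exists α ∈ (0, 1/2) such that Σ_{k≥1} N_R(K, 2^{-k})^2 · exp(−2^{αk}) < ∞. Then ∫₀¹ ( log N_R(K, u⁴) )^{1/2} du < ∞. -/

import Mathlib

open MeasureTheory Set
open scoped ENNReal

/-- The metric entropy `N_d(K, ε)` of a subset `K` of a metric space: the minimal cardinality
of a finite subset `A ⊆ K` such that every point of `K` is within distance `ε` of `A`. -/
noncomputable def coveringNumber {S : Type*} [MetricSpace S] (K : Set S) (ε : ℝ) : ℕ :=
  sInf {n : ℕ | ∃ A : Finset S, ↑A ⊆ K ∧ A.card = n ∧ ∀ x ∈ K, ∃ a ∈ A, dist x a ≤ ε}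

section Aux

variable {S : Type*} [MetricSpace S]

lemma coveringNumber_le {K : Set S} {ε : ℝ} {A : Finset S} (hA : ↑A ⊆ K)
    (hcov : ∀ x ∈ K, ∃ a ∈ A, dist x a ≤ ε) : coveringNumber K ε ≤ A.card :=
  Nat.sInf_le ⟨A, hA, rfl, hcov⟩

lemma exists_cover {K : Set S} (hKc : IsCompact K) {ε : ℝ} (hε : 0 < ε) :
    ∃ A : Finset S, ↑A ⊆ K ∧ ∀ x ∈ K, ∃ a ∈ A, dist x a ≤ ε := by
  obtain ⟨t, hts, htf, hcov⟩ := finite_cover_balls_of_compact hKc hε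
  refine ⟨htf.toFinset, by simpa using hts, fun x hx => ?_⟩
  obtain ⟨a, ha, hxa⟩ := Set.mem_iUnion₂.1 (hcov hx)
  exact ⟨a, htf.mem_toFinset.2 ha, le_of_lt hxa⟩

lemma coveringSet_nonempty {K : Set S} (hKc : IsCompact K) {ε : ℝ} (hε : 0 < ε) :
    {n : ℕ | ∃ A : Finset S, ↑A ⊆ K ∧ A.card = n ∧ ∀ x ∈ K, ∃ a ∈ A, dist x a ≤ ε}.Nonempty := by
  obtain ⟨A, hA, hcov⟩ := exists_cover hKc hε
  exact ⟨A.card, A, hA, rfl, hcov⟩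

lemma coveringNumber_pos {K : Set S} (hKne : K.Nonempty) (hKc : IsCompact K) {ε : ℝ}
    (hε : 0 < ε) : 0 < coveringNumber K ε := by
  obtain ⟨A, hA, hcard, hcov⟩ := Nat.sInf_mem (coveringSet_nonempty hKc hε)
  obtain ⟨x, hx⟩ := hKne
  obtain ⟨a, haA, -⟩ := hcov x hx
  rw [show coveringNumber K ε = A.card from hcard.symm]
  exact Finset.card_pos.2 ⟨a, haA⟩

lemma coveringNumber_anti {K : Set S} (hKc : IsCompact K) {ε ε' : ℝ} (hε : 0 < ε)
    (h : ε ≤ ε') : coveringNumber K ε' ≤ coveringNumber K ε := by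
  obtain ⟨A, hA, hcard, hcov⟩ := Nat.sInf_mem (coveringSet_nonempty hKc hε)
  rw [show coveringNumber K ε = A.card from hcard.symm]
  exact coveringNumber_le hA fun x hx => by
    obtain ⟨a, haA, hxa⟩ := hcov x hx; exact ⟨a, haA, hxa.trans h⟩

lemma sqrt_add_le_aux {a b : ℝ} (ha : 0 ≤ a) (hb : 0 ≤ b) :
    Real.sqrt (a + b) ≤ Real.sqrt a + Real.sqrt b := by
  have h : a + b ≤ (Real.sqrt a + Real.sqrt b) ^ 2 := by
    nlinarith [Real.sq_sqrt ha, Real.sq_sqrt hb, Real.sqrt_nonneg a, Real.sqrt_nonneg b]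
  calc Real.sqrt (a + b) ≤ Real.sqrt ((Real.sqrt a + Real.sqrt b) ^ 2) := Real.sqrt_le_sqrt h
    _ = Real.sqrt a + Real.sqrt b := Real.sqrt_sq (by positivity)

end Aux

/-- (From the proof of joint continuity of local times: the summability condition implies
Dudley's entropy-integral condition for the snowflaked metric `R^{1/4}`.)
If `K` is a nonempty compact subset of a metric space `(F,R)` and there is `α ∈ (0,1/2)` with
`Σ_{k ≥ 1} N_R(K, 2^{-k})² exp(-2^{α k}) < ∞`, then
`∫₀¹ (log N_R(K, u⁴))^{1/2} du < ∞`. -/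
theorem stmt9 {F : Type*} [MetricSpace F] (K : Set F) (hKne : K.Nonempty)
    (hKc : IsCompact K) (α : ℝ) (hα : α ∈ Set.Ioo (0 : ℝ) (1 / 2))
    (hsum : Summable (fun k : ℕ =>
      ((coveringNumber K ((2 : ℝ) ^ (-((k : ℤ) + 1))) : ℝ)) ^ 2 *
        Real.exp (-(2 : ℝ) ^ (α * ((k : ℝ) + 1))))) :
    ∫⁻ u in Set.Ioo (0 : ℝ) 1,
      ENNReal.ofReal (Real.sqrt (Real.log (coveringNumber K (u ^ 4)))) < ⊤ := by
  obtain ⟨hα0, hα2⟩ := hα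
  set T : ℝ := ∑' k : ℕ, ((coveringNumber K ((2 : ℝ) ^ (-((k : ℤ) + 1))) : ℝ)) ^ 2 *
      Real.exp (-(2 : ℝ) ^ (α * ((k : ℝ) + 1))) with hTdef
  set C : ℝ := max T 1 with hCdef
  have hC1 : (1 : ℝ) ≤ C := le_max_right _ _
  have hC0 : (0 : ℝ) < C := lt_of_lt_of_le one_pos hC1
  -- each term is bounded by C
  have hterm : ∀ k : ℕ, ((coveringNumber K ((2 : ℝ) ^ (-((k : ℤ) + 1))) : ℝ)) ^ 2 ≤
      C * Real.exp ((2 : ℝ) ^ (α * ((k : ℝ) + 1))) := by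
    intro k
    have hle : ((coveringNumber K ((2 : ℝ) ^ (-((k : ℤ) + 1))) : ℝ)) ^ 2 *
        Real.exp (-(2 : ℝ) ^ (α * ((k : ℝ) + 1))) ≤ T :=
      Summable.le_tsum hsum k fun i _ => by positivity
    have hle' : ((coveringNumber K ((2 : ℝ) ^ (-((k : ℤ) + 1))) : ℝ)) ^ 2 *
        Real.exp (-(2 : ℝ) ^ (α * ((k : ℝ) + 1))) ≤ C := hle.trans (le_max_left _ _)
    have hexp : (0 : ℝ) < Real.exp ((2 : ℝ) ^ (α * ((k : ℝ) + 1))) := Real.exp_pos _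
    calc ((coveringNumber K ((2 : ℝ) ^ (-((k : ℤ) + 1))) : ℝ)) ^ 2
        = (((coveringNumber K ((2 : ℝ) ^ (-((k : ℤ) + 1))) : ℝ)) ^ 2 *
            Real.exp (-(2 : ℝ) ^ (α * ((k : ℝ) + 1)))) *
            Real.exp ((2 : ℝ) ^ (α * ((k : ℝ) + 1))) := by
          rw [mul_assoc, ← Real.exp_add]; simp
      _ ≤ C * Real.exp ((2 : ℝ) ^ (α * ((k : ℝ) + 1))) := by
          exact mul_le_mul_of_nonneg_right hle' hexp.le
  -- log bound at dyadic scales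
  have hlog : ∀ k : ℕ, Real.log (coveringNumber K ((2 : ℝ) ^ (-((k : ℤ) + 1)))) ≤
      Real.log C + (2 : ℝ) ^ (α * ((k : ℝ) + 1)) := by
    intro k
    set N : ℕ := coveringNumber K ((2 : ℝ) ^ (-((k : ℤ) + 1))) with hN
    have hNpos : 0 < N := coveringNumber_pos hKne hKc (by positivity)
    have hN1 : (1 : ℝ) ≤ (N : ℝ) := by exact_mod_cast hNpos
    have h1 : Real.log (N : ℝ) ≤ Real.log ((N : ℝ) ^ 2) := by
      rw [Real.log_pow]
      have := Real.log_nonneg hN1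
      push_cast
      linarith
    have h2 : Real.log ((N : ℝ) ^ 2) ≤
        Real.log (C * Real.exp ((2 : ℝ) ^ (α * ((k : ℝ) + 1)))) :=
      Real.log_le_log (by positivity) (hterm k)
    have h3 : Real.log (C * Real.exp ((2 : ℝ) ^ (α * ((k : ℝ) + 1)))) =
        Real.log C + (2 : ℝ) ^ (α * ((k : ℝ) + 1)) := by
      rw [Real.log_mul (ne_of_gt hC0) (Real.exp_ne_zero _), Real.log_exp]
    linarith
  -- pointwise bound on the integrand
  set D1 : ℝ := Real.sqrt (Real.log C) with hD1
  set D2 : ℝ := Real.sqrt ((2 : ℝ) ^ α) with hD2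
  have hpt : ∀ u ∈ Set.Ioo (0 : ℝ) 1,
      Real.sqrt (Real.log (coveringNumber K (u ^ 4))) ≤ D1 + D2 * u ^ (-(2 * α)) := by
    rintro u ⟨hu0, hu1⟩
    have ht0 : (0 : ℝ) < u ^ 4 := by positivity
    have ht1 : u ^ 4 ≤ 1 := pow_le_one₀ hu0.le hu1.le
    set L : ℝ := Real.logb 2 (u ^ 4)⁻¹ with hL
    have hL0 : 0 ≤ L := Real.logb_nonneg one_lt_two (one_le_inv_iff₀.2 ⟨ht0, ht1⟩)
    set k : ℕ := ⌊L⌋₊ with hk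
    have hk1 : (k : ℝ) ≤ L := Nat.floor_le hL0
    have hk2 : L < (k : ℝ) + 1 := Nat.lt_floor_add_one L
    -- 2 ^ (-(k+1)) ≤ u ^ 4
    have hrpow : (2 : ℝ) ^ L = (u ^ 4)⁻¹ := Real.rpow_logb two_pos (by norm_num) (by positivity)
    have hdya : (2 : ℝ) ^ (-((k : ℤ) + 1)) ≤ u ^ 4 := by
      have h1 : (u ^ 4)⁻¹ ≤ (2 : ℝ) ^ ((k : ℝ) + 1) := by
        rw [← hrpow]
        exact Real.rpow_le_rpow_left_iff one_lt_two |>.2 hk2.le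
      have h2 : ((2 : ℝ) ^ ((k : ℝ) + 1))⁻¹ ≤ u ^ 4 := by
        rw [inv_le_comm₀ (Real.rpow_pos_of_pos two_pos _) ht0]
        exact h1
      calc (2 : ℝ) ^ (-((k : ℤ) + 1)) = ((2 : ℝ) ^ ((k : ℝ) + 1))⁻¹ := by
            rw [← Real.rpow_intCast 2 (-((k : ℤ) + 1)), ← Real.rpow_neg (by norm_num)]
            push_cast
            ring_nf
        _ ≤ u ^ 4 := h2
    have hcovle : (coveringNumber K (u ^ 4) : ℝ) ≤
        (coveringNumber K ((2 : ℝ) ^ (-((k : ℤ) + 1))) : ℝ) := by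
      exact_mod_cast coveringNumber_anti hKc (by positivity) hdya
    have hcovpos : (1 : ℝ) ≤ (coveringNumber K (u ^ 4) : ℝ) := by
      exact_mod_cast coveringNumber_pos hKne hKc ht0
    -- bound 2 ^ (α (k+1)) by 2 ^ α * u ^ (-(4 α))
    have hexp_bound : (2 : ℝ) ^ (α * ((k : ℝ) + 1)) ≤ (2 : ℝ) ^ α * u ^ (-(4 * α)) := by
      have h1 : (2 : ℝ) ^ (α * ((k : ℝ) + 1)) ≤ (2 : ℝ) ^ (α * (L + 1)) := by
        apply Real.rpow_le_rpow_left_iff one_lt_two |>.2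
        nlinarith
      have h2 : (2 : ℝ) ^ (α * (L + 1)) = (2 : ℝ) ^ α * ((2 : ℝ) ^ L) ^ α := by
        rw [show α * (L + 1) = α + L * α by ring, Real.rpow_add two_pos,
          Real.rpow_mul (by norm_num : (0:ℝ) ≤ 2)]
      have h3 : ((2 : ℝ) ^ L) ^ α = u ^ (-(4 * α)) := by
        rw [hrpow]
        have : (u ^ 4)⁻¹ = u ^ (-(4 : ℝ)) := by
          rw [← Real.rpow_natCast u 4, ← Real.rpow_neg hu0.le]
          norm_num
        rw [this, ← Real.rpow_mul hu0.le]
        norm_num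
      rw [h2, h3] at h1
      exact h1
    -- combine
    have hlogu : Real.log (coveringNumber K (u ^ 4)) ≤
        Real.log C + (2 : ℝ) ^ α * u ^ (-(4 * α)) := by
      have := hlog k
      have hmono : Real.log (coveringNumber K (u ^ 4)) ≤
          Real.log (coveringNumber K ((2 : ℝ) ^ (-((k : ℤ) + 1)))) :=
        Real.log_le_log (by linarith) hcovle
      linarith
    have hsq : Real.sqrt (Real.log (coveringNumber K (u ^ 4))) ≤
        Real.sqrt (Real.log C + (2 : ℝ) ^ α * u ^ (-(4 * α))) := Real.sqrt_le_sqrt hlogu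
    have hsplit : Real.sqrt (Real.log C + (2 : ℝ) ^ α * u ^ (-(4 * α))) ≤
        D1 + D2 * u ^ (-(2 * α)) := by
      have hlogC : 0 ≤ Real.log C := Real.log_nonneg hC1
      have hb : 0 ≤ (2 : ℝ) ^ α * u ^ (-(4 * α)) := by positivity
      refine (sqrt_add_le_aux hlogC hb).trans ?_
      have : Real.sqrt ((2 : ℝ) ^ α * u ^ (-(4 * α))) = D2 * u ^ (-(2 * α)) := by
        rw [Real.sqrt_mul (by positivity), hD2]
        congr 1
        rw [Real.sqrt_eq_rpow, ← Real.rpow_mul hu0.le]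
        norm_num
        ring_nf
      rw [this, hD1]
    exact hsq.trans hsplit
  -- the bounding function is integrable
  have h2α : (-1 : ℝ) < -(2 * α) := by linarith
  have hint : IntegrableOn (fun u : ℝ => u ^ (-(2 * α))) (Set.Ioo (0 : ℝ) 1) := by
    have h := intervalIntegral.intervalIntegrable_rpow' (a := (0:ℝ)) (b := 1) h2α
    rwa [intervalIntegrable_iff_integrableOn_Ioo_of_le (by norm_num : (0:ℝ) ≤ 1)] at h
  have hg_int : IntegrableOn (fun u : ℝ => D1 + D2 * u ^ (-(2 * α))) (Set.Ioo (0 : ℝ) 1) := by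
    exact (integrableOn_const measure_Ioo_lt_top.ne).add (hint.const_mul D2)
  have hg_meas : Measurable (fun u : ℝ => ENNReal.ofReal (D1 + D2 * u ^ (-(2 * α)))) := by
    fun_prop
  calc ∫⁻ u in Set.Ioo (0 : ℝ) 1,
        ENNReal.ofReal (Real.sqrt (Real.log (coveringNumber K (u ^ 4))))
      ≤ ∫⁻ u in Set.Ioo (0 : ℝ) 1, ENNReal.ofReal (D1 + D2 * u ^ (-(2 * α))) :=
        setLIntegral_mono hg_meas fun u hu => ENNReal.ofReal_le_ofReal (hpt u hu)
    _ < ⊤ := hg_int.lintegral_lt_top
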